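/- Let b₁,…,b_N ∈ ℝ² be nonzero vectors ordered clockwise projectively. Call a nonzero vector v = (v₁,v₂) ∈ ℝ² 'upper' if v₂ > 0 or (v₂ = 0 and v₁ > 0), and 'lower' otherwise. Then Σ_{1≤j<k≤N} det⁺(b_j,b_k) = Σ |det(b_j,b_k)|, where the right-hand sum runs over all pairs j < k such that exactly one of b_j, b_k is upper. -/

import Mathlib

open Finset

/-- `det(u,v) = u₁v₂ − u₂v₁` for `u, v ∈ ℝ²`. -/
def det2 (u v : ℝ × ℝ) : ℝ := u.1 * v.2 - u.2 * v.1

/-- `b₁,…,b_N` are ordered clockwise projectively. -/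
def ClockwiseOrdered {N : ℕ} (b : Fin N → ℝ × ℝ) : Prop :=
  ∀ j k : Fin N, j < k →
    ((b j).2 = 0 → (b k).2 = 0) ∧
    ((b j).2 ≠ 0 → (b k).2 ≠ 0 → -(b j).1 / (b j).2 ≥ -(b k).1 / (b k).2)

/-- A nonzero vector `v ∈ ℝ²` is *upper* if `v₂ > 0` or (`v₂ = 0` and `v₁ > 0`). -/
def IsUpper (v : ℝ × ℝ) : Prop := 0 < v.2 ∨ (v.2 = 0 ∧ 0 < v.1)

lemma max_eq_abs_of_nonneg (d : ℝ) (h : 0 ≤ d) : max d 0 = |d| := by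
  rw [max_eq_left h, abs_of_nonneg h]

open Classical in
lemma key_case (u v : ℝ × ℝ) (hu : u ≠ 0) (hv : v ≠ 0)
    (h1 : u.2 = 0 → v.2 = 0)
    (h2 : u.2 ≠ 0 → v.2 ≠ 0 → -u.1 / u.2 ≥ -v.1 / v.2) :
    max (det2 u v) 0 = if (IsUpper u ↔ IsUpper v) then 0 else |det2 u v| := by
  by_cases hu2 : u.2 = 0
  · have hv2 := h1 hu2
    simp [det2, hu2, hv2]
  · have hU : IsUpper u ↔ 0 < u.2 := by simp [IsUpper, hu2]
    by_cases hv2 : v.2 = 0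
    · have hv1 : v.1 ≠ 0 := by
        intro h
        exact hv (Prod.ext h hv2)
      have hV : IsUpper v ↔ 0 < v.1 := by simp [IsUpper, hv2]
      have hd : det2 u v = -(u.2 * v.1) := by simp [det2, hv2]
      rw [hU, hV]
      rcases (lt_or_gt_of_ne hu2) with h | h <;> rcases (lt_or_gt_of_ne hv1) with h' | h'
      · rw [if_pos (iff_of_false (not_lt.mpr h.le) (not_lt.mpr h'.le)), hd]
        exact max_eq_right (by nlinarith)
      · rw [if_neg (fun hiff => absurd (hiff.mpr h') (not_lt.mpr h.le)), hd]
        exact max_eq_abs_of_nonneg _ (by nlinarith)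
      · rw [if_neg (fun hiff => absurd (hiff.mp h) (not_lt.mpr h'.le)), hd]
        exact max_eq_abs_of_nonneg _ (by nlinarith)
      · rw [if_pos (iff_of_true h h'), hd]
        exact max_eq_right (by nlinarith)
    · have hV : IsUpper v ↔ 0 < v.2 := by simp [IsUpper, hv2]
      have hslope := h2 hu2 hv2
      have key : det2 u v * (u.2 * v.2) ≤ 0 := by
        have e : det2 u v * (u.2 * v.2) =
            (u.2 * v.2) ^ 2 * ((-v.1 / v.2) - (-u.1 / u.2)) := by
          field_simp [det2]
          simp only [det2]; ring
        rw [e]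
        exact mul_nonpos_of_nonneg_of_nonpos (sq_nonneg _) (by linarith)
      rw [hU, hV]
      rcases (lt_or_gt_of_ne hu2) with h | h <;> rcases (lt_or_gt_of_ne hv2) with h' | h'
      · rw [if_pos (iff_of_false (not_lt.mpr h.le) (not_lt.mpr h'.le))]
        exact max_eq_right (by nlinarith [mul_pos_of_neg_of_neg h h'])
      · rw [if_neg (fun hiff => absurd (hiff.mpr h') (not_lt.mpr h.le))]
        exact max_eq_abs_of_nonneg _ (by nlinarith [mul_neg_of_neg_of_pos h h'])
      · rw [if_neg (fun hiff => absurd (hiff.mp h) (not_lt.mpr h'.le))]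
        exact max_eq_abs_of_nonneg _ (by nlinarith [mul_neg_of_pos_of_neg h h'])
      · rw [if_pos (iff_of_true h h')]
        exact max_eq_right (by nlinarith [mul_pos h h'])

open Classical in
theorem statement4 {N : ℕ} (b : Fin N → ℝ × ℝ)
    (hnz : ∀ j, b j ≠ 0)
    (hcw : ClockwiseOrdered b) :
    ∑ j : Fin N, ∑ k ∈ Finset.Ioi j, max (det2 (b j) (b k)) 0 =
      ∑ j : Fin N, ∑ k ∈ Finset.Ioi j,
        if (IsUpper (b j) ↔ IsUpper (b k)) then 0 else |det2 (b j) (b k)| := by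
  refine Finset.sum_congr rfl fun j _ => Finset.sum_congr rfl fun k hk => ?_
  have hjk : j < k := Finset.mem_Ioi.mp hk
  obtain ⟨h1, h2⟩ := hcw j k hjk
  exact key_case (b j) (b k) (hnz j) (hnz k) h1 h2
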